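/- arXiv:1911.09973 — 8 statements merged into one kernel-verified Lean document; each statement's English description precedes it below -/
import Mathlib

section
/- The infinite Thue word t = τ^ω(0), where τ(0)=012, τ(1)=02, τ(2)=1, is square-free. -/
/-- A word has a square if some nonempty `u` with `u ++ u` an infix. -/
def HasSquare (w : List (Fin 3)) : Prop :=
  ∃ u : List (Fin 3), u ≠ [] ∧ (u ++ u) <:+: w

def SquareFree (w : List (Fin 3)) : Prop := ¬ HasSquare w

/-- `u` occurs as a factor of the infinite word `x`. -/
def InfFactor (u : List (Fin 3)) (x : ℕ → Fin 3) : Prop :=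
  ∃ m : ℕ, ∀ i < u.length, u.getD i 0 = x (m + i)

def InfSquareFree (x : ℕ → Fin 3) : Prop :=
  ¬ ∃ u : List (Fin 3), u ≠ [] ∧ InfFactor (u ++ u) x

/-- A square-free word is irreducibly square-free if deleting any interior
letter creates a square. -/
def IrrSF (w : List (Fin 3)) : Prop :=
  SquareFree w ∧
    ∀ (w1 w2 : List (Fin 3)) (a : Fin 3),
      w = w1 ++ [a] ++ w2 → w1 ≠ [] → w2 ≠ [] → HasSquare (w1 ++ w2)

/-- The Thue morphism τ(0)=012, τ(1)=02, τ(2)=1. -/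
def tau : Fin 3 → List (Fin 3) := ![[0,1,2], [0,2], [1]]

def tauW (w : List (Fin 3)) : List (Fin 3) := w.flatMap tau

/-- The Thue word `t = τ^ω(0)`: the `n`-th letter of the fixed point of τ. -/
def thue (n : ℕ) : Fin 3 := ((tauW^[n+1]) [0]).getD n 0

/-! ### The Thue–Morse sequence -/

/-- The Thue–Morse sequence: parity of the number of 1 bits. -/
def TM (n : ℕ) : Bool := (Nat.digits 2 n).count 1 % 2 == 1

lemma TM_zero : TM 0 = false := by simp [TM]

lemma TM_double (n : ℕ) : TM (2 * n) = TM n := by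
  rcases Nat.eq_zero_or_pos n with h | h
  · subst h; rfl
  · unfold TM
    rw [Nat.digits_def' (by norm_num : (1:ℕ) < 2) (by omega : 0 < 2 * n)]
    have h1 : 2 * n % 2 = 0 := by omega
    have h2 : 2 * n / 2 = n := by omega
    rw [h1, h2]
    simp [List.count_cons]

lemma TM_double_add_one (n : ℕ) : TM (2 * n + 1) = !TM n := by
  unfold TM
  rw [Nat.digits_def' (by norm_num : (1:ℕ) < 2) (by omega : 0 < 2 * n + 1)]
  have h1 : (2 * n + 1) % 2 = 1 := by omega
  have h2 : (2 * n + 1) / 2 = n := by omega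
  rw [h1, h2]
  set c := (Nat.digits 2 n).count 1 with hc
  have hcount : ((1 : ℕ) :: Nat.digits 2 n).count 1 = c + 1 := by
    simp [List.count_cons, hc]
  rw [hcount]
  rcases Nat.mod_two_eq_zero_or_one c with h | h
  · have h1' : (c + 1) % 2 = 1 := by omega
    rw [h, h1']; rfl
  · have h1' : (c + 1) % 2 = 0 := by omega
    rw [h, h1']; rfl

lemma TM_one : TM 1 = true := by
  rw [show (1:ℕ) = 2*0+1 from rfl, TM_double_add_one, TM_zero]; rfl

lemma TM_pair (k : ℕ) : TM (2*k+1) ≠ TM (2*k) := by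
  rw [TM_double, TM_double_add_one]; cases TM k <;> simp

lemma TM_no_three (n : ℕ) (h1 : TM n = TM (n+1)) (h2 : TM (n+1) = TM (n+2)) : False := by
  rcases Nat.even_or_odd n with ⟨k, hk⟩ | ⟨k, hk⟩
  · exact TM_pair k (by rw [show 2*k+1 = n+1 by omega, show 2*k = n by omega, h1])
  · exact TM_pair (k+1)
      (by rw [show 2*(k+1)+1 = n+2 by omega, show 2*(k+1) = n+1 by omega, h2])

/-- The Thue–Morse sequence is overlap-free. -/
theorem TM_no_overlap (q : ℕ) : 0 < q → ∀ m : ℕ,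
    (∀ i ≤ q, TM (m + i) = TM (m + q + i)) → False := by
  induction q using Nat.strong_induction_on with
  | _ q ih =>
  intro hq m H
  rcases Nat.even_or_odd q with ⟨q', hq'⟩ | ⟨q', hq'⟩
  · -- q = q' + q'
    have hq'pos : 0 < q' := by omega
    rcases Nat.even_or_odd m with ⟨k, hk⟩ | ⟨k, hk⟩
    · refine ih q' (by omega) hq'pos k (fun j hj => ?_)
      have h := H (2*j) (by omega)
      rw [show m + 2*j = 2*(k+j) by omega, show m + q + 2*j = 2*(k + q' + j) by omega,
        TM_double, TM_double] at h
      exact h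
    · refine ih q' (by omega) hq'pos k (fun j hj => ?_)
      have h := H (2*j) (by omega)
      rw [show m + 2*j = 2*(k+j)+1 by omega, show m + q + 2*j = 2*(k + q' + j)+1 by omega,
        TM_double_add_one, TM_double_add_one] at h
      simpa using h
  · -- q = 2 * q' + 1
    have alt : ∀ i, i < q → TM (m + i + 1) = !TM (m + i) := by
      intro i hi
      rcases Nat.even_or_odd (m + i) with ⟨k, hk⟩ | ⟨k, hk⟩
      · rw [show m + i + 1 = 2*k+1 by omega, show m + i = 2*k by omega,
          TM_double_add_one, TM_double]
      · have e1 := H i (by omega)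
        have e2 := H (i+1) (by omega)
        rw [show m + (i+1) = m + i + 1 by omega,
          show m + q + (i+1) = 2*(k+q'+1) + 1 by omega, TM_double_add_one] at e2
        rw [e2, e1, show m + q + i = 2*(k+q'+1) by omega, TM_double]
    have evensteps : ∀ j, 2*j ≤ q → TM (m + 2*j) = TM m := by
      intro j
      induction j with
      | zero => intro _; norm_num
      | succ j ihj =>
        intro hj
        have h1 := alt (2*j+1) (by omega)
        have h2 := alt (2*j) (by omega)
        rw [show m + 2*(j+1) = m + (2*j+1) + 1 by omega, h1,
          show m + (2*j+1) = m + 2*j + 1 by omega, h2]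
        simp [ihj (by omega)]
    have h1 := evensteps q' (by omega)
    have h2 := alt (2*q') (by omega)
    have h3 := H 0 (by omega)
    rw [show m + 0 = m by omega, show m + q + 0 = m + 2*q' + 1 by omega, h2, h1] at h3
    cases hb : TM m <;> rw [hb] at h3 <;> simp at h3

/-! ### The ternary Thue word as a coding of Thue–Morse -/

/-- Sliding-block coding of Thue–Morse giving the ternary Thue word. -/
def Tc (n : ℕ) : Fin 3 := if TM n = TM (n+1) then 1 else if TM n then 2 else 0

/-- Position where the `n`-th τ-block starts in the fixed point. -/
def Bk (n : ℕ) : ℕ := 2 * n + (if TM n then 1 else 0)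

lemma tau_zero : tau 0 = [0,1,2] := rfl
lemma tau_one : tau 1 = [0,2] := rfl
lemma tau_two : tau 2 = [1] := rfl

lemma range_map_Tc_key (n : ℕ) :
    (List.range (Bk (n+1))).map Tc = (List.range (Bk n)).map Tc ++ tau (Tc n) := by
  have d0 : TM (2*n) = TM n := TM_double n
  have d1 : TM (2*n+1) = !TM n := TM_double_add_one n
  have d2 : TM (2*n+2) = TM (n+1) := by rw [show 2*n+2 = 2*(n+1) by ring, TM_double]
  have d3 : TM (2*n+3) = !TM (n+1) := by rw [show 2*n+3 = 2*(n+1)+1 by ring, TM_double_add_one]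
  cases hn : TM n <;> cases hn1 : TM (n+1) <;> rw [hn] at d0 d1 <;> rw [hn1] at d2 d3
  · -- false false : Tc n = 1, block [0,2]
    have eB : Bk n = 2*n := by simp [Bk, hn]
    have eB1 : Bk (n+1) = 2*n + 2 := by simp [Bk, hn1]; ring
    have eT : Tc n = 1 := by simp [Tc, hn, hn1]
    have t0 : Tc (2*n) = 0 := by simp [Tc, d0, d1]
    have t1 : Tc (2*n+1) = 2 := by
      have e : TM (2*n+1+1) = false := by rw [show 2*n+1+1 = 2*n+2 by ring, d2]
      simp [Tc, d1, e]
    rw [eB, eB1, eT, tau_one, show 2*n+2 = (2*n+1) + 1 by ring, List.range_succ,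
      List.range_succ]
    simp [t0, t1]
  · -- false true : Tc n = 0, block [0,1,2]
    have eB : Bk n = 2*n := by simp [Bk, hn]
    have eB1 : Bk (n+1) = 2*n + 3 := by simp [Bk, hn1]; ring
    have eT : Tc n = 0 := by simp [Tc, hn, hn1]
    have t0 : Tc (2*n) = 0 := by simp [Tc, d0, d1]
    have t1 : Tc (2*n+1) = 1 := by
      have e : TM (2*n+1+1) = true := by rw [show 2*n+1+1 = 2*n+2 by ring, d2]
      simp [Tc, d1, e]
    have t2 : Tc (2*n+2) = 2 := by
      have e : TM (2*n+2+1) = false := by rw [show 2*n+2+1 = 2*n+3 by ring, d3]; rfl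
      simp [Tc, d2, e]
    rw [eB, eB1, eT, tau_zero, show 2*n+3 = (2*n+2) + 1 by ring, List.range_succ,
      show 2*n+2 = (2*n+1) + 1 by ring, List.range_succ, List.range_succ]
    simp [t0, t1, t2]
  · -- true false : Tc n = 2, block [1]
    have eB : Bk n = 2*n + 1 := by simp [Bk, hn]
    have eB1 : Bk (n+1) = 2*n + 2 := by simp [Bk, hn1]; ring
    have eT : Tc n = 2 := by simp [Tc, hn, hn1]
    have t0 : Tc (2*n+1) = 1 := by
      have e : TM (2*n+1+1) = false := by rw [show 2*n+1+1 = 2*n+2 by ring, d2]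
      simp [Tc, d1, e]
    rw [eB, eB1, eT, tau_two, show 2*n+2 = (2*n+1) + 1 by ring, List.range_succ]
    simp [t0]
  · -- true true : Tc n = 1, block [0,2]
    have eB : Bk n = 2*n + 1 := by simp [Bk, hn]
    have eB1 : Bk (n+1) = 2*n + 3 := by simp [Bk, hn1]; ring
    have eT : Tc n = 1 := by simp [Tc, hn, hn1]
    have t0 : Tc (2*n+1) = 0 := by
      have e : TM (2*n+1+1) = true := by rw [show 2*n+1+1 = 2*n+2 by ring, d2]
      simp [Tc, d1, e]
    have t1 : Tc (2*n+2) = 2 := by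
      have e : TM (2*n+2+1) = false := by rw [show 2*n+2+1 = 2*n+3 by ring, d3]; rfl
      simp [Tc, d2, e]
    rw [eB, eB1, eT, tau_one, show 2*n+3 = (2*n+2) + 1 by ring, List.range_succ,
      show 2*n+2 = (2*n+1) + 1 by ring, List.range_succ]
    simp [t0, t1]

lemma tauW_append (a b : List (Fin 3)) : tauW (a ++ b) = tauW a ++ tauW b := by
  simp [tauW]

lemma tauW_range (n : ℕ) : tauW ((List.range n).map Tc) = (List.range (Bk n)).map Tc := by
  induction n with
  | zero =>
    have : Bk 0 = 0 := by simp [Bk, TM_zero]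
    rw [this]; rfl
  | succ n ih =>
    rw [List.range_succ, List.map_append, tauW_append, ih, range_map_Tc_key]
    congr 1
    simp [tauW]

/-- Lengths of the iterates. -/
def Lk : ℕ → ℕ
  | 0 => 1
  | (k+1) => Bk (Lk k)

lemma Tc_zero : Tc 0 = 0 := by simp [Tc, TM_zero, TM_one]

lemma iter_tauW (k : ℕ) : (tauW^[k]) [0] = (List.range (Lk k)).map Tc := by
  induction k with
  | zero =>
    rw [show Lk 0 = 1 from rfl, show (1:ℕ) = 0+1 from rfl, List.range_succ]
    simp [Tc_zero]
  | succ k ih =>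
    rw [Function.iterate_succ_apply', ih, tauW_range]
    rfl

lemma Bk_ge (n : ℕ) : 2*n ≤ Bk n := by unfold Bk; split <;> omega

lemma Lk_ge (k : ℕ) : k + 1 ≤ Lk k := by
  induction k with
  | zero => simp [Lk]
  | succ k ih =>
    have h := Bk_ge (Lk k)
    show k + 1 + 1 ≤ Bk (Lk k)
    omega

lemma thue_eq_Tc (n : ℕ) : thue n = Tc n := by
  unfold thue
  rw [iter_tauW (n+1)]
  have h1 : n < Lk (n+1) := by have := Lk_ge (n+1); omega
  have h2 : n < ((List.range (Lk (n+1))).map Tc).length := by simpa using h1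
  rw [List.getD_eq_getElem _ _ h2]
  simp

/-! ### Transfer lemmas between `Tc` and `TM` -/

lemma Tc_next (n : ℕ) :
    TM (n+1) = (if Tc n = 1 then TM n else if Tc n = 2 then false else true) := by
  unfold Tc
  cases h : TM n <;> cases h1 : TM (n+1) <;> simp [h, h1]

lemma Tc_prev (n : ℕ) :
    TM n = (if Tc n = 1 then TM (n+1) else if Tc n = 2 then true else false) := by
  unfold Tc
  cases h : TM n <;> cases h1 : TM (n+1) <;> simp [h, h1]

lemma Tc_step_f {a b : ℕ} (h : Tc a = Tc b) (h0 : TM a = TM b) : TM (a+1) = TM (b+1) := by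
  rw [Tc_next a, Tc_next b, h, h0]

lemma Tc_step_b {a b : ℕ} (h : Tc a = Tc b) (h1 : TM (a+1) = TM (b+1)) : TM a = TM b := by
  rw [Tc_prev a, Tc_prev b, h, h1]

lemma Tc_anchor {a b : ℕ} (h : Tc a = Tc b) (hne : Tc a ≠ 1) : TM a = TM b := by
  have hb : Tc b ≠ 1 := by rw [← h]; exact hne
  rw [Tc_prev a, Tc_prev b, h, if_neg hb, if_neg hb]

lemma Tc_eq_one {n : ℕ} (h : Tc n = 1) : TM n = TM (n+1) := by
  have := Tc_prev n
  rw [h] at this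
  simpa using this

/-! ### Main theorem -/

theorem thue_squareFree : InfSquareFree thue := by
  rintro ⟨u, hne, m, hfac⟩
  set q := u.length with hq
  have hqpos : 0 < q := by
    rw [hq]
    exact List.length_pos_iff.mpr hne
  -- the square yields a `Tc`-period of length `q` starting at `m`
  have hT : ∀ i, i < q → Tc (m + i) = Tc (m + q + i) := by
    intro i hi
    have h1 := hfac i (by simp; omega)
    have h2 := hfac (q + i) (by simp; omega)
    rw [thue_eq_Tc] at h1 h2
    have e1 : (u ++ u).getD i 0 = u.getD i 0 := List.getD_append _ _ _ _ (by omega)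
    have e2 : (u ++ u).getD (q + i) 0 = u.getD i 0 := by
      rw [List.getD_append_right _ _ _ _ (by omega)]
      congr 1
      omega
    rw [e1] at h1
    rw [e2] at h2
    rw [show m + (q + i) = m + q + i by omega] at h2
    rw [← h1, ← h2]
  by_cases hall : ∀ i, i < q → Tc (m + i) = 1
  · -- all letters 1 : TM constant on three consecutive points, impossible
    have t1 : Tc m = 1 := by have := hall 0 hqpos; simpa using this
    have t2 : Tc (m + 1) = 1 := by
      rcases Nat.lt_or_ge 1 q with h | h
      · exact hall 1 h
      · have hq1 : q = 1 := by omega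
        have h0 := hT 0 hqpos
        rw [hq1] at h0
        simp at h0
        rw [← h0]
        exact t1
    refine TM_no_three m (Tc_eq_one t1) ?_
    have := Tc_eq_one t2
    rw [show m + 1 + 1 = m + 2 by omega] at this
    exact this
  · push_neg at hall
    obtain ⟨i0, hi0q, hi0⟩ := hall
    have anchor : TM (m + i0) = TM (m + q + i0) := Tc_anchor (hT i0 hi0q) hi0
    have up : ∀ j, i0 ≤ j → j ≤ q → TM (m + j) = TM (m + q + j) := by
      intro j hj
      induction j, hj using Nat.le_induction with
      | base => intro _; exact anchor
      | succ j hj ihj =>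
        intro hjq
        have hstep := Tc_step_f (hT j (by omega)) (ihj (by omega))
        rw [show m + (j+1) = m + j + 1 by omega,
          show m + q + (j+1) = m + q + j + 1 by omega]
        exact hstep
    have down : ∀ d, d ≤ i0 → TM (m + (i0 - d)) = TM (m + q + (i0 - d)) := by
      intro d
      induction d with
      | zero => intro _; simpa using anchor
      | succ d ihd =>
        intro hd
        have hprev := ihd (by omega)
        rw [show m + (i0 - d) = m + (i0 - (d+1)) + 1 by omega,
          show m + q + (i0 - d) = m + q + (i0 - (d+1)) + 1 by omega] at hprev
        exact Tc_step_b (hT (i0 - (d+1)) (by omega)) hprev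
    refine TM_no_overlap q hqpos m (fun i hi => ?_)
    rcases le_or_gt i0 i with h | h
    · exact up i h hi
    · have hd := down (i0 - i) (by omega)
      rw [show i0 - (i0 - i) = i by omega] at hd
      exact hd
end

section
/- The Thue word t = τ^ω(0) does not contain 010 as a factor. -/
/-! ### Auxiliary lemmas -/

lemma infix_split {α : Type*} {u : List α} :
    ∀ {x y : List α}, u <:+: x ++ y →
      u <:+: x ∨ u <:+: y ∨
        ∃ u1 u2, u = u1 ++ u2 ∧ u1 ≠ [] ∧ u1 <:+ x ∧ u2 <+: y := by
  intro x
  induction x with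
  | nil => intro y h; exact Or.inr (Or.inl h)
  | cons a x ih =>
    intro y h
    rw [List.cons_append, List.infix_cons_iff] at h
    rcases h with h | h
    · -- u is a prefix of a :: (x ++ y)
      rcases u with _ | ⟨b, u'⟩
      · exact Or.inl List.nil_infix
      · rw [List.cons_prefix_cons] at h
        obtain ⟨rfl, hu'⟩ := h
        obtain ⟨n, rfl⟩ : ∃ n, u' = (x ++ y).take n := ⟨u'.length, (List.prefix_iff_eq_take.mp hu')⟩
        rw [List.take_append]
        by_cases hn : n ≤ x.length
        · rw [Nat.sub_eq_zero_of_le hn, List.take_zero, List.append_nil]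
          exact Or.inl (List.cons_prefix_cons.mpr ⟨rfl, x.take_prefix n⟩).isInfix
        · refine Or.inr (Or.inr ⟨b :: x.take n, y.take (n - x.length),
            rfl, by simp, ?_, y.take_prefix _⟩)
          rw [List.take_of_length_le (le_of_lt (not_le.mp hn))]
    · rcases ih h with h1 | h2 | ⟨u1, u2, he, hne, hsuf, hpre⟩
      · exact Or.inl (List.infix_cons h1)
      · exact Or.inr (Or.inl h2)
      · exact Or.inr (Or.inr ⟨u1, u2, he, hne, hsuf.trans (List.suffix_cons a x), hpre⟩)

/-- No image of τ contains 010. -/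
lemma not_infix_tauW : ∀ w : List (Fin 3), ¬ ([0, 1, 0] <:+: tauW w) := by
  intro w
  induction w with
  | nil => decide
  | cons a w ih =>
    intro h
    have : tauW (a :: w) = tau a ++ tauW w := by simp [tauW]
    rw [this] at h
    rcases infix_split h with h1 | h2 | ⟨u1, u2, he, hne, hsuf, hpre⟩
    · -- 010 infix of tau a : impossible
      fin_cases a <;> revert h1 <;> decide
    · exact ih h2
    · -- u1 is a nonempty suffix of tau a and a "prefix" of [0,1,0]
      have hu1 : u1 = [0] ∨ u1 = [0, 1] ∨ u1 = [0, 1, 0] := by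
        have hpre3 : u1 <+: [0, 1, 0] := ⟨u2, he.symm⟩
        have he' := List.prefix_iff_eq_take.mp hpre3
        have h3 : u1.length ≤ 3 := by simpa using hpre3.length_le
        have h0 : 0 < u1.length := List.length_pos_iff.mpr hne
        rcases (by omega : u1.length = 1 ∨ u1.length = 2 ∨ u1.length = 3) with h | h | h <;>
          rw [he', h] <;> decide
      rcases hu1 with rfl | rfl | rfl <;> fin_cases a <;> revert hsuf <;> decide

lemma tauW_prefix_mono {u v : List (Fin 3)} (h : u <+: v) : tauW u <+: tauW v := by
  obtain ⟨w, rfl⟩ := h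
  exact ⟨tauW w, by simp [tauW]⟩

lemma iter_prefix (n : ℕ) : (tauW^[n]) [0] <+: (tauW^[n + 1]) [0] := by
  induction n with
  | zero => exact ⟨[1, 2], by decide⟩
  | succ n ih =>
    rw [Function.iterate_succ_apply', Function.iterate_succ_apply']
    exact tauW_prefix_mono ih

lemma iter_prefix_le {m n : ℕ} (h : m ≤ n) : (tauW^[m]) [0] <+: (tauW^[n]) [0] := by
  induction n with
  | zero => simp_all
  | succ n ih =>
    rcases Nat.lt_or_ge m (n + 1) with h' | h'
    · exact (ih (Nat.lt_succ_iff.mp h')).trans (iter_prefix n)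
    · have : m = n + 1 := le_antisymm h h'
      subst this; exact List.prefix_rfl

lemma length_tauW_ge (w : List (Fin 3)) : w.length ≤ (tauW w).length := by
  induction w with
  | nil => simp [tauW]
  | cons a w ih =>
    have : tauW (a :: w) = tau a ++ tauW w := by simp [tauW]
    rw [this, List.length_append, List.length_cons]
    have ha : 1 ≤ (tau a).length := by fin_cases a <;> decide
    omega

lemma iter_length (n : ℕ) : n + 1 ≤ ((tauW^[n]) [0]).length := by
  induction n with
  | zero => decide
  | succ n ih =>
    rw [Function.iterate_succ_apply']
    have h2 := length_tauW_ge ((tauW^[n]) [0])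
    -- need strict growth: head of iterate is 0
    have hpre : [0] <+: (tauW^[n]) [0] := by
      simpa using iter_prefix_le (Nat.zero_le n)
    obtain ⟨r, hr⟩ := hpre
    have : tauW ((tauW^[n]) [0]) = [0, 1, 2] ++ tauW r := by
      rw [← hr]; simp [tauW, tau]
    rw [this, List.length_append]
    have := length_tauW_ge r
    have hrlen : ((tauW^[n]) [0]).length = 1 + r.length := by
      rw [← hr]; simp [Nat.add_comm]
    simp only [List.length_cons, List.length_nil] at *
    omega

lemma thue_eq_getD {k n : ℕ} (h : k < n) :
    thue k = ((tauW^[n]) [0]).getD k 0 := by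
  unfold thue
  obtain ⟨r, hr⟩ := iter_prefix_le (Nat.succ_le_of_lt h)
  rw [← hr, List.getD_append]
  have := iter_length (k + 1)
  simp only [Nat.succ_eq_add_one]
  omega

theorem thue_avoids_010 : ¬ InfFactor [0, 1, 0] thue := by
  rintro ⟨m, hm⟩
  set L := (tauW^[m + 3]) [0] with hL
  have hlen : m + 4 ≤ L.length := iter_length (m + 3)
  have hval : ∀ i, i < 3 → L.getD (m + i) 0 = [0, 1, 0].getD i 0 := by
    intro i hi
    rw [hm i (by simpa using hi)]
    exact (thue_eq_getD (by omega)).symm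
  -- [0,1,0] = (L.drop m).take 3
  have heq : (L.drop m).take 3 = [0, 1, 0] := by
    apply List.ext_getElem
    · rw [List.length_take, List.length_drop]; simp; omega
    · intro i h1 h2
      have hi : i < 3 := by simpa using h2
      have h3 : m + i < L.length := by omega
      have := hval i hi
      rw [List.getD_eq_getElem _ _ h3] at this
      rw [List.getElem_take, List.getElem_drop]
      rw [this]
      rcases (by omega : i = 0 ∨ i = 1 ∨ i = 2) with rfl | rfl | rfl <;> rfl
  have hinf : [0, 1, 0] <:+: L := by
    rw [← heq]
    exact ((L.drop m).take_prefix 3).isInfix.trans (L.drop_suffix m).isInfix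
  have : L = tauW ((tauW^[m + 2]) [0]) := by
    rw [hL, Function.iterate_succ_apply']
  rw [this] at hinf
  exact not_infix_tauW _ hinf
end

section
/- The Thue word t = τ^ω(0) is not irreducibly square-free: deleting the letter 2 at the third position of t yields a square-free infinite word. -/
/-- Deleting the letter at the third position (index 2) of the Thue word. -/
def thueDel (n : ℕ) : Fin 3 := if n < 2 then thue n else thue (n + 1)


/-- fuel-based Thue-Morse bit -/
def Mgo : ℕ → ℕ → Bool
  | 0, _ => false
  | _+1, 0 => false
  | fuel+1, n+1 => xor ((n+1) % 2 == 1) (Mgo fuel ((n+1)/2))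

def M (n : ℕ) : Bool := Mgo n n

lemma Mgo_stable : ∀ fuel n, n ≤ fuel → Mgo fuel n = M n := by
  intro fuel
  induction fuel using Nat.strong_induction_on with
  | _ fuel ih =>
    intro n hn
    match fuel, n with
    | 0, 0 => rfl
    | f+1, 0 => rfl
    | f+1, n+1 =>
      show xor _ (Mgo f ((n+1)/2)) = M (n+1)
      have h1 : (n+1)/2 ≤ f := by omega
      have h2 : (n+1)/2 ≤ n := by omega
      rw [ih f (by omega) _ h1]
      show _ = Mgo (n+1) (n+1)
      rw [show Mgo (n+1) (n+1) = xor ((n+1) % 2 == 1) (Mgo n ((n+1)/2)) from rfl,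
        ih n (by omega) _ h2]

lemma M_two_mul (n : ℕ) : M (2*n) = M n := by
  cases n with
  | zero => rfl
  | succ k =>
    show Mgo (2*(k+1)) (2*(k+1)) = M (k+1)
    have : 2*(k+1) = (2*k+1)+1 := by omega
    rw [this]
    show xor (((2*k+1)+1) % 2 == 1) (Mgo (2*k+1) (((2*k+1)+1)/2)) = M (k+1)
    have h2 : ((2*k+1)+1)/2 = k+1 := by omega
    have h3 : ((2*k+1)+1) % 2 = 0 := by omega
    rw [h2, h3, Mgo_stable _ _ (by omega)]
    simp

lemma M_two_mul_add_one (n : ℕ) : M (2*n+1) = !M n := by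
  show Mgo (2*n+1) (2*n+1) = !M n
  have : 2*n+1 = (2*n)+1 := rfl
  show xor ((2*n+1) % 2 == 1) (Mgo (2*n) ((2*n+1)/2)) = !M n
  have h2 : (2*n+1)/2 = n := by omega
  have h3 : (2*n+1) % 2 = 1 := by omega
  rw [h2, h3, Mgo_stable _ _ (by omega)]
  simp [Bool.xor_comm]

lemma pairRule {n : ℕ} (h : M n = M (n+1)) : n % 2 = 1 := by
  by_contra ho
  have he : n % 2 = 0 := by omega
  obtain ⟨j, rfl⟩ : ∃ j, n = 2*j := ⟨n/2, by omega⟩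
  rw [M_two_mul, M_two_mul_add_one] at h
  simp at h

lemma noCC {n : ℕ} (h1 : M n = M (n+1)) (h2 : M (n+1) = M (n+2)) : False := by
  have := pairRule h1
  have := pairRule h2
  omega

/-- The coded Thue word. -/
def T (n : ℕ) : Fin 3 := if M n = M (n+1) then 1 else if M (n+1) then 0 else 2

lemma T_def0 {n : ℕ} (h : T n = 0) : M n = false ∧ M (n+1) = true := by
  unfold T at h
  split at h
  · simp at h
  · split at h
    · next h1 h2 => exact ⟨by simp [h2] at h1 ⊢; exact h1, h2⟩
    · simp at h

lemma T_def1 {n : ℕ} (h : T n = 1) : M n = M (n+1) := by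
  unfold T at h
  split at h
  · assumption
  · split at h <;> simp at h

lemma T_def2 {n : ℕ} (h : T n = 2) : M n = true ∧ M (n+1) = false := by
  unfold T at h
  split at h
  · simp at h
  · split at h
    · simp at h
    · next h1 h2 =>
      simp at h2
      exact ⟨by simp [h2] at h1 ⊢; exact h1, h2⟩

lemma T_of_M_ne {n : ℕ} (h : M n ≠ M (n+1)) :
    T n = if M (n+1) then 0 else 2 := by
  unfold T
  rw [if_neg h]

lemma T_eq_one_iff {n : ℕ} : T n = 1 ↔ M n = M (n+1) := by
  constructor
  · exact T_def1
  · intro h; unfold T; rw [if_pos h]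

/-- chain propagation helper -/
lemma chain (Q : ℕ → Prop) (a b : ℕ) (hstep : ∀ k, a ≤ k → k < b → (Q k ↔ Q (k+1))) :
    ∀ j k, a ≤ j → j ≤ k → k ≤ b → (Q j ↔ Q k) := by
  intro j k haj hjk hkb
  induction k with
  | zero => have : j = 0 := by omega
            subst this; rfl
  | succ m ih =>
    rcases Nat.lt_or_ge j (m+1) with h | h
    · have := ih (by omega) (by omega)
      rw [this, hstep m (by omega) (by omega)]
    · have : j = m+1 := by omega
      subst this; rfl

lemma oddTriple {c j : ℕ} (h0 : M (2*j) = M (2*j+(2*c+1)))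
    (h1 : M (2*j+1) = M (2*j+1+(2*c+1))) (h2 : M (2*j+2) = M (2*j+2+(2*c+1))) :
    j % 2 = 1 ∧ (j+c) % 2 = 1 := by
  rw [M_two_mul, show 2*j+(2*c+1) = 2*(j+c)+1 by ring, M_two_mul_add_one] at h0
  rw [M_two_mul_add_one, show 2*j+1+(2*c+1) = 2*(j+c+1) by ring, M_two_mul] at h1
  rw [show 2*j+2+(2*c+1) = 2*(j+c+1)+1 by ring, M_two_mul_add_one,
      show 2*j+2 = 2*(j+1) by ring, M_two_mul] at h2
  have hjodd : j % 2 = 1 := by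
    apply pairRule (n := j)
    cases hA : M (j+c+1) <;> cases hB : M j <;> simp_all
  have : (j+c) % 2 = 1 := by
    apply pairRule (n := j+c)
    cases hA : M (j+c+1) <;> cases hB : M j <;> simp_all
  exact ⟨hjodd, this⟩

lemma noOverlap : ∀ L, 1 ≤ L → ∀ p, ¬ (∀ i ≤ L, M (p+i) = M (p+L+i)) := by
  intro L
  induction L using Nat.strong_induction_on with
  | _ L ih =>
    intro hL p h
    rcases Nat.lt_or_ge L 2 with h2 | h2
    · -- L = 1
      have : L = 1 := by omega
      subst this
      exact noCC (by have := h 0 (by omega); simpa using this)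
        (by have := h 1 (by omega); rw [show p+1+1 = p+2 by ring]
            have := h 1 (by omega)
            rw [show p+1 = p + 1 by rfl] at this
            convert this using 2 <;> omega)
    · rcases Nat.even_or_odd L with ⟨K, hK⟩ | ⟨c, hc⟩
      · -- L = 2K even
        have hK1 : 1 ≤ K := by omega
        apply ih K (by omega) hK1 (p/2)
        intro j hj
        rcases Nat.even_or_odd p with ⟨q, hq⟩ | ⟨q, hq⟩
        · have hpq : p/2 = q := by omega
          have := h (2*j) (by omega)
          rw [show p + 2*j = 2*(q+j) by omega, M_two_mul,
              show p + L + 2*j = 2*(q+K+j) by omega, M_two_mul] at this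
          rw [hpq, show q+j = q + j by rfl]
          convert this using 2 <;> omega
        · have hpq : p/2 = q := by omega
          have := h (2*j) (by omega)
          rw [show p + 2*j = 2*(q+j)+1 by omega, M_two_mul_add_one,
              show p + L + 2*j = 2*(q+K+j)+1 by omega, M_two_mul_add_one] at this
          rw [hpq]
          have : M (q+j) = M (q+K+j) := by
            cases hA : M (q+j) <;> cases hB : M (q+K+j) <;> simp_all
          convert this using 2 <;> omega
      · -- L = 2c+1 odd
        have hc1 : 1 ≤ c := by omega
        set j := (p+1)/2 with hj
        have h2j : p ≤ 2*j ∧ 2*j ≤ p+1 := by omega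
        have getTriple : ∀ j', p ≤ 2*j' → 2*j'+2 ≤ p+L →
            j' % 2 = 1 ∧ (j'+c) % 2 = 1 := by
          intro j' hlo hhi
          apply oddTriple (c := c) (j := j')
          · have := h (2*j'-p) (by omega)
            rw [show p + (2*j'-p) = 2*j' by omega] at this
            convert this using 2; omega
          · have := h (2*j'+1-p) (by omega)
            rw [show p + (2*j'+1-p) = 2*j'+1 by omega] at this
            convert this using 2; omega
          · have := h (2*j'+2-p) (by omega)
            rw [show p + (2*j'+2-p) = 2*j'+2 by omega] at this
            convert this using 2; omega
        rcases Nat.lt_or_ge c 2 with hcs | hcs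
        · -- c = 1, L = 3
          have hc' : c = 1 := by omega
          have := getTriple j (by omega) (by omega)
          omega
        · -- c ≥ 2, L ≥ 5
          have t1 := getTriple j (by omega) (by omega)
          have t2 := getTriple (j+1) (by omega) (by omega)
          omega

lemma boolXfer : ∀ a b c d : Bool, ((a = b) ↔ (c = d)) → ((a = c) ↔ (b = d)) := by decide

lemma T_pair_iff {a b : ℕ} (h : T a = T b) :
    (M a = M (a+1)) ↔ (M b = M (b+1)) := by
  rw [← T_eq_one_iff, ← T_eq_one_iff, h]

/-- If `T` has a nonzero increment at `n` and `T n = T m`, the bit pairs agree. -/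
lemma T_sync {n m : ℕ} (hne : M n ≠ M (n+1)) (h : T n = T m) :
    M n = M m ∧ M (n+1) = M (m+1) := by
  have hn := T_of_M_ne hne
  cases hb : M (n+1)
  · rw [hb] at hn; simp at hn
    rw [hn] at h
    have h2 := T_def2 h.symm
    have h1 : M n = true := by
      cases hA : M n
      · rw [hA, hb] at hne; simp at hne
      · rfl
    rw [h1, h2.1, h2.2]
    exact ⟨rfl, rfl⟩
  · rw [hb] at hn; simp at hn
    rw [hn] at h
    have h2 := T_def0 h.symm
    have h1 : M n = false := by
      cases hA : M n
      · rfl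
      · rw [hA, hb] at hne; simp at hne
    rw [h1, h2.1, h2.2]
    exact ⟨rfl, rfl⟩

lemma TSF : ∀ L, 1 ≤ L → ∀ p, ¬ (∀ i < L, T (p+i) = T (p+L+i)) := by
  intro L hL p h
  by_cases hinc : ∃ i, i < L ∧ M (p+i) ≠ M (p+i+1)
  · obtain ⟨i, hi, hne⟩ := hinc
    have hsync := T_sync hne (h i hi)
    set Q : ℕ → Prop := fun j => M (p+j) = M (p+L+j) with hQ
    have step : ∀ k, 0 ≤ k → k < L → (Q k ↔ Q (k+1)) := by
      intro k _ hk
      have hp := T_pair_iff (h k hk)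
      have := boolXfer (M (p+k)) (M (p+k+1)) (M (p+L+k)) (M (p+L+k+1)) hp
      simp only [hQ]
      rw [show p+(k+1) = p+k+1 by ring, show p+L+(k+1) = p+L+k+1 by ring]
      exact this
    have hQi : Q i := by
      simp only [hQ]; exact hsync.1
    have hall : ∀ j ≤ L, Q j := by
      intro j hj
      rcases le_or_gt j i with hji | hij
      · exact (chain Q 0 L step j i (by omega) hji (by omega)).mpr hQi
      · exact (chain Q 0 L step i j (by omega) (by omega) hj).mp hQi
    exact noOverlap L hL p hall
  · push_neg at hinc
    rcases Nat.lt_or_ge L 2 with h1 | h2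
    · have hL1 : L = 1 := by omega
      subst hL1
      have hm : M p = M (p+1) := by simpa using hinc 0 (by omega)
      have ht : T p = 1 := T_eq_one_iff.mpr hm
      have ht2 : T (p+1) = 1 := by
        have := h 0 (by omega)
        simp only [Nat.add_zero] at this
        rw [← this]; exact ht
      exact noCC hm (by have := T_def1 ht2; rwa [show p+1+1 = p+2 by ring] at this)
    · have e1 : M p = M (p+1) := by simpa using hinc 0 (by omega)
      have e2 : M (p+1) = M (p+2) := by
        have := hinc 1 (by omega)
        rwa [show p+1+1 = p+2 by ring] at this
      exact noCC e1 e2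

/-- the deleted word at the level of `T`. -/
def dT (n : ℕ) : Fin 3 := if n < 2 then T n else T (n+1)

lemma Mval : M 3 = false ∧ M 5 = false ∧ M 6 = false := by decide

lemma Tval : T 0 = 0 ∧ T 1 = 1 ∧ T 3 = 0 ∧ T 4 = 2 ∧ T 7 = 1 := by decide

lemma R1 {n : ℕ} (h0 : T n = 0) (h1 : T (n+1) = 1) : T (n+2) = 2 := by
  obtain ⟨ha, hb⟩ := T_def0 h0
  have hc : M (n+2) = true := by
    have := T_def1 h1
    rw [show n+1+1 = n+2 by ring] at this
    rw [← this]; exact hb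
  have hd : M (n+3) = false := by
    cases hD : M (n+3)
    · rfl
    · exfalso
      apply noCC (n := n+1)
      · rw [show n+1+1 = n+2 by ring, hb, hc]
      · rw [show n+1+1 = n+2 by ring, show n+1+2 = n+3 by ring, hc, hD]
  unfold T
  rw [show n+2+1 = n+3 by ring, hc, hd]
  simp

lemma dTSF : ∀ L, 1 ≤ L → ∀ m, ¬ (∀ i < L, dT (m+i) = dT (m+L+i)) := by
  intro L hL m h
  obtain ⟨hT0, hT1, hT3, hT4, hT7⟩ := Tval
  rcases Nat.lt_or_ge m 2 with hm | hm
  case inr =>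
    -- interior: a square in T itself
    apply TSF L hL (m+1)
    intro i hi
    have := h i hi
    unfold dT at this
    rw [if_neg (by omega), if_neg (by omega)] at this
    rw [show m+1+i = m+i+1 by ring, show m+1+L+i = m+L+i+1 by ring]
    exact this
  case inl =>
    interval_cases m
    · -- m = 0
      rcases Nat.lt_or_ge L 3 with hLs | hLb
      · interval_cases L
        · have := h 0 (by omega)
          unfold dT at this
          rw [if_pos (by omega), if_pos (by omega)] at this
          simp only [Nat.zero_add] at this
          rw [hT0, hT1] at this
          exact absurd this (by decide)
        · have := h 1 (by omega)
          unfold dT at this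
          rw [if_pos (by omega), if_neg (by omega)] at this
          norm_num at this
          rw [hT1, hT4] at this
          exact absurd this (by decide)
      · have e0 := h 0 (by omega)
        have e1 := h 1 (by omega)
        have e2 := h 2 (by omega)
        unfold dT at e0 e1 e2
        rw [if_pos (by omega), if_neg (by omega)] at e0
        rw [if_pos (by omega), if_neg (by omega)] at e1
        rw [if_neg (by omega), if_neg (by omega)] at e2
        simp only [Nat.zero_add] at e0 e1 e2
        rw [hT0] at e0
        rw [hT1] at e1
        rw [show L+0+1 = L+1 by ring] at e0
        rw [show L+1+1 = L+2 by ring] at e1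
        have hR := R1 (n := L+1) e0.symm (by rw [show L+1+1 = L+2 by ring]; exact e1.symm)
        rw [show 0+2+1 = 3 by ring, hT3] at e2
        rw [show L+1+2 = L+2+1 by ring] at hR
        rw [hR] at e2
        exact absurd e2 (by decide)
    · -- m = 1
      rcases Nat.lt_or_ge L 4 with hLs | hLb
      · interval_cases L
        · have := h 0 (by omega)
          unfold dT at this
          rw [if_pos (by omega), if_neg (by omega)] at this
          norm_num at this
          rw [hT1, hT3] at this
          exact absurd this (by decide)
        · have := h 0 (by omega)
          unfold dT at this
          rw [if_pos (by omega), if_neg (by omega)] at this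
          norm_num at this
          rw [hT1, hT4] at this
          exact absurd this (by decide)
        · have := h 2 (by omega)
          unfold dT at this
          rw [if_neg (by omega), if_neg (by omega)] at this
          norm_num at this
          rw [hT4, hT7] at this
          exact absurd this (by decide)
      · -- m = 1, L ≥ 4
        obtain ⟨hM3, hM5, hM6⟩ := Mval
        have hTL2 : T (L+2) = 1 := by
          have := h 0 (by omega)
          unfold dT at this
          rw [if_pos (by omega), if_neg (by omega)] at this
          norm_num at this
          rw [hT1, show 1+L+1 = L+2 by ring] at this
          exact this.symm
        have E : ∀ i, 1 ≤ i → i < L → T (2+i) = T (2+L+i) := by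
          intro i h1 h2
          have := h i h2
          unfold dT at this
          rw [if_neg (by omega), if_neg (by omega)] at this
          rw [show 2+i = 1+i+1 by ring, show 2+L+i = 1+L+i+1 by ring]
          exact this
        by_cases hinc : ∃ i, 1 ≤ i ∧ i < L ∧ M (2+i) ≠ M (2+i+1)
        · obtain ⟨i, hi1, hi2, hne⟩ := hinc
          have hsync := T_sync hne (E i hi1 hi2)
          set Q : ℕ → Prop := fun j => M j = M (j+L) with hQ
          have step : ∀ k, 3 ≤ k → k < L+2 → (Q k ↔ Q (k+1)) := by
            intro k hk1 hk2
            have hp := T_pair_iff (E (k-2) (by omega) (by omega))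
            rw [show 2+(k-2) = k by omega, show 2+L+(k-2) = k+L by omega] at hp
            have := boolXfer (M k) (M (k+1)) (M (k+L)) (M (k+L+1)) hp
            simp only [hQ]
            rw [show k+1+L = k+L+1 by ring]
            exact this
          have hQi : Q (2+i) := by
            simp only [hQ]
            rw [show 2+i+L = 2+L+i by ring]
            exact hsync.1
          have hall : ∀ j, 3 ≤ j → j ≤ L+2 → Q j := by
            intro j hj1 hj2
            rcases le_or_gt j (2+i) with hji | hij
            · exact (chain Q 3 (L+2) step j (2+i) hj1 hji (by omega)).mpr hQi
            · exact (chain Q 3 (L+2) step (2+i) j (by omega) (by omega) hj2).mp hQi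
          -- L is odd
          have hML3 : M (L+3) = false := by
            have := hall 3 (by omega) (by omega)
            simp only [hQ] at this
            rw [hM3, show 3+L = L+3 by ring] at this
            exact this.symm
          have hML2 : M (L+2) = false := by
            have := T_def1 hTL2
            rw [show L+2+1 = L+3 by ring, hML3] at this
            exact this
          have hLodd : (L+2) % 2 = 1 := pairRule (by
            rw [show L+2+1 = L+3 by ring, hML2, hML3])
          obtain ⟨c, hc⟩ : ∃ c, L = 2*c+1 := ⟨L/2, by omega⟩
          have hQ5 := hall 5 (by omega) (by omega)
          have hQ6 := hall 6 (by omega) (by omega)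
          simp only [hQ] at hQ5 hQ6
          rw [hM5, show 5+L = 2*(c+3) by omega, M_two_mul] at hQ5
          rw [hM6, show 6+L = 2*(c+3)+1 by omega, M_two_mul_add_one] at hQ6
          rw [← hQ5] at hQ6
          simp at hQ6
        · push_neg at hinc
          have i1 := hinc 1 (by omega) (by omega)
          norm_num at i1
          rw [hM3] at i1
          have : M 4 = true := by decide
          rw [this] at i1
          simp at i1

lemma T01 {n : ℕ} (ha : M n = false) (hb : M (n+1) = true) : T n = 0 := by
  unfold T; rw [ha, hb]; simp

lemma T10 {n : ℕ} (ha : M n = true) (hb : M (n+1) = false) : T n = 2 := by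
  unfold T; rw [ha, hb]; simp

def fB (n : ℕ) : ℕ := 2*n + (M n).toNat

def P (ℓ : ℕ) : List (Fin 3) := (List.range ℓ).map T

lemma P_succ (ℓ : ℕ) : P (ℓ+1) = P ℓ ++ [T ℓ] := by
  simp [P, List.range_succ]

lemma step (n : ℕ) : P (fB n) ++ tau (T n) = P (fB (n+1)) := by
  have e2 : M (2*n+2) = M (n+1) := by
    rw [show 2*n+2 = 2*(n+1) by ring, M_two_mul]
  have e3 : M (2*n+3) = !M (n+1) := by
    rw [show 2*n+3 = 2*(n+1)+1 by ring, M_two_mul_add_one]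
  cases hA : M n <;> cases hB : M (n+1)
  · -- (false, false) : T n = 1, tau 1 = [0,2]
    have hT : T n = 1 := T_eq_one_iff.mpr (by rw [hA, hB])
    have hf1 : fB n = 2*n := by simp [fB, hA]
    have hf2 : fB (n+1) = 2*n+2 := by simp [fB, hB]; ring
    rw [hT, hf1, hf2]
    rw [show 2*n+2 = (2*n+1)+1 by ring, P_succ, show 2*n+1 = (2*n)+1 by ring, P_succ]
    have v0 : T (2*n) = 0 := T01 (by rw [M_two_mul, hA]) (M_two_mul_add_one n ▸ (by rw [hA]; rfl))
    have v1 : T (2*n+1) = 2 := T10 (by rw [M_two_mul_add_one, hA]; rfl) (by rw [show 2*n+1+1 = 2*n+2 by ring, e2, hB])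
    rw [v0, v1]
    simp [tau]
  · -- (false, true) : T n = 0, tau 0 = [0,1,2]
    have hT : T n = 0 := T01 hA hB
    have hf1 : fB n = 2*n := by simp [fB, hA]
    have hf2 : fB (n+1) = 2*n+3 := by simp [fB, hB]; ring
    rw [hT, hf1, hf2]
    rw [show 2*n+3 = (2*n+2)+1 by ring, P_succ, show 2*n+2 = (2*n+1)+1 by ring, P_succ,
        show 2*n+1 = (2*n)+1 by ring, P_succ]
    have v0 : T (2*n) = 0 := T01 (by rw [M_two_mul, hA]) (by rw [M_two_mul_add_one, hA]; rfl)
    have v1 : T (2*n+1) = 1 := T_eq_one_iff.mpr (by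
      rw [M_two_mul_add_one, hA, show 2*n+1+1 = 2*n+2 by ring, e2, hB]; rfl)
    have v2 : T (2*n+2) = 2 := T10 (by rw [e2, hB]) (by rw [show 2*n+2+1 = 2*n+3 by ring, e3, hB]; rfl)
    rw [v0, v1, v2]
    simp [tau]
  · -- (true, false) : T n = 2, tau 2 = [1]
    have hT : T n = 2 := T10 hA hB
    have hf1 : fB n = 2*n+1 := by simp [fB, hA]
    have hf2 : fB (n+1) = 2*n+2 := by simp [fB, hB]; ring
    rw [hT, hf1, hf2]
    have v0 : T (2*n+1) = 1 := T_eq_one_iff.mpr (by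
      rw [M_two_mul_add_one, hA, show 2*n+1+1 = 2*n+2 by ring, e2, hB]; rfl)
    have hx : P (2*n+2) = P (2*n+1) ++ [T (2*n+1)] := by
      rw [show 2*n+2 = (2*n+1)+1 by ring]; exact P_succ _
    rw [hx, v0]
    simp [tau]
  · -- (true, true) : T n = 1, tau 1 = [0,2]
    have hT : T n = 1 := T_eq_one_iff.mpr (by rw [hA, hB])
    have hf1 : fB n = 2*n+1 := by simp [fB, hA]
    have hf2 : fB (n+1) = 2*n+3 := by simp [fB, hB]; ring
    rw [hT, hf1, hf2]
    have v0 : T (2*n+1) = 0 := T01 (by rw [M_two_mul_add_one, hA]; rfl) (by rw [show 2*n+1+1 = 2*n+2 by ring, e2, hB])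
    have v1 : T (2*n+2) = 2 := T10 (by rw [e2, hB]) (by rw [show 2*n+2+1 = 2*n+3 by ring, e3, hB]; rfl)
    have hx : P (2*n+3) = P (2*n+1) ++ [T (2*n+1)] ++ [T (2*n+2)] := by
      rw [show 2*n+3 = (2*n+2)+1 by ring, P_succ,
          show 2*n+2 = (2*n+1)+1 by ring, P_succ]
    rw [hx, v0, v1]
    simp [tau]

lemma tauP : ∀ n, tauW (P n) = P (fB n) := by
  intro n
  induction n with
  | zero => simp [P, tauW, fB, show M 0 = false from rfl]
  | succ k ih =>
    rw [P_succ, show tauW (P k ++ [T k]) = tauW (P k) ++ tauW [T k] from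
      (by simp [tauW]), ih]
    have : tauW [T k] = tau (T k) := by simp [tauW]
    rw [this, step]

lemma iter_eq_P : ∀ k, ∃ ℓ, k + 1 ≤ ℓ ∧ tauW^[k] [0] = P ℓ := by
  intro k
  induction k with
  | zero =>
    refine ⟨1, le_refl _, ?_⟩
    have : T 0 = 0 := Tval.1
    simp [P, List.range_succ, this]
  | succ k ih =>
    obtain ⟨ℓ, hℓ, hW⟩ := ih
    refine ⟨fB ℓ, by unfold fB; omega, ?_⟩
    rw [Function.iterate_succ_apply', hW, tauP]

lemma thue_eq_T (n : ℕ) : thue n = T n := by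
  obtain ⟨ℓ, hℓ, hW⟩ := iter_eq_P (n+1)
  unfold thue
  rw [hW]
  have hlen : n < (P ℓ).length := by simp [P]; omega
  rw [List.getD_eq_getElem _ _ hlen]
  simp [P]

lemma thueDel_eq_dT (n : ℕ) : thueDel n = dT n := by
  unfold thueDel dT
  split <;> rw [thue_eq_T]

theorem thue_not_irreducibly_squareFree :
    thue 2 = 2 ∧ InfSquareFree thueDel := by
  constructor
  · rw [thue_eq_T]; decide
  · rintro ⟨u, hu, m, hfac⟩
    set L := u.length with hLdef
    have hL : 1 ≤ L := List.length_pos_iff.mpr hu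
    apply dTSF L hL m
    intro i hi
    have hlen : (u ++ u).length = L + L := by simp [hLdef]
    have h1 := hfac i (by omega)
    have h2 := hfac (L + i) (by omega)
    rw [List.getD_append _ _ _ _ (by omega)] at h1
    rw [List.getD_append_right _ _ _ _ (by omega)] at h2
    rw [show L + i - u.length = i by omega] at h2
    rw [show m + (L + i) = m + L + i by ring] at h2
    rw [← thueDel_eq_dT, ← thueDel_eq_dT, ← h1, ← h2]
end

section
/- There are no irreducibly square-free ternary words of length 4, 5, 7, or 12. -/
def sqTestB (w : List (Fin 3)) : Bool :=
  (List.range (w.length+1)).any fun i =>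
    (List.range (w.length/2+1)).any fun k =>
      decide (k ≠ 0) && decide (i + 2*k ≤ w.length) &&
      decide ((w.drop i).take k = (w.drop (i+k)).take k)

lemma hasSquare_iff (w : List (Fin 3)) : HasSquare w ↔ sqTestB w = true := by
  constructor
  · rintro ⟨u, hu, s, t, hw⟩
    have hlen : w.length = s.length + (u.length + (u.length + t.length)) := by
      subst hw; simp [List.length_append]
    simp only [sqTestB, List.any_eq_true, List.mem_range]
    refine ⟨s.length, by omega, u.length, by omega, ?_⟩
    have h1 : w.drop s.length = u ++ (u ++ t) := by
      rw [← hw]; rw [List.append_assoc, List.append_assoc, List.drop_left]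
    have h2 : w.drop (s.length + u.length) = u ++ t := by
      rw [← List.drop_drop, h1]
      · simp [List.drop_left]
    simp only [h1, h2, List.take_left]
    have : u.length ≠ 0 := by simpa using hu
    simp [this, Bool.and_eq_true, decide_eq_true_eq]
    omega
  · intro ht
    simp only [sqTestB, List.any_eq_true, List.mem_range, Bool.and_eq_true,
      decide_eq_true_eq] at ht
    obtain ⟨i, _, k, _, ⟨hk, hle⟩, heq⟩ := ht
    set u := (w.drop i).take k with hu
    have hul : u.length = k := by
      simp [hu, List.length_take, List.length_drop]; omega
    refine ⟨u, by intro h; rw [h] at hul; simp at hul; omega, w.take i, w.drop (i + 2*k), ?_⟩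
    have step1 : w = w.take i ++ w.drop i := (List.take_append_drop i w).symm
    have e1 : k + i = i + k := by omega
    have e2 : i + k + k = i + 2*k := by omega
    have step2 : w.drop i = u ++ w.drop (i + k) := by
      rw [hu]
      conv_lhs => rw [← List.take_append_drop k (w.drop i)]
      rw [List.drop_drop]
    have step3 : w.drop (i + k) = u ++ w.drop (i + 2*k) := by
      conv_lhs => rw [← List.take_append_drop k (w.drop (i+k))]
      rw [List.drop_drop, e2, ← heq]
    conv_rhs => rw [step1, step2, step3]
    simp [List.append_assoc]

theorem test : True := trivial

lemma squareFree_of_infix {v w : List (Fin 3)} (h : v <:+: w) (hw : SquareFree w) :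
    SquareFree v := fun ⟨u, hu, hinf⟩ => hw ⟨u, hu, hinf.trans h⟩


def lastSqB (w : List (Fin 3)) : Bool :=
  (List.range (w.length/2+1)).any fun k =>
    decide (k ≠ 0) && decide ((w.drop (w.length - 2*k)).take k = w.drop (w.length - k))

lemma hasSquare_of_lastSqB {w : List (Fin 3)} (h : lastSqB w = true) : HasSquare w := by
  simp only [lastSqB, List.any_eq_true, List.mem_range, Bool.and_eq_true,
    decide_eq_true_eq] at h
  obtain ⟨k, hkr, hk0, heq⟩ := h
  rw [hasSquare_iff]
  simp only [sqTestB, List.any_eq_true, List.mem_range, Bool.and_eq_true, decide_eq_true_eq]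
  have h2k : 2*k ≤ w.length := by omega
  refine ⟨w.length - 2*k, by omega, k, by omega, ⟨hk0, by omega⟩, ?_⟩
  have hidx : w.length - 2*k + k = w.length - k := by omega
  rw [hidx, heq]
  have hl : (w.drop (w.length - k)).length = k := by
    rw [List.length_drop]; omega
  exact (List.take_of_length_le hl.le).symm

def sfWords : ℕ → List (List (Fin 3))
  | 0 => [[]]
  | n+1 => (((sfWords n).flatMap fun w =>
      ([0,1,2] : List (Fin 3)).map (fun a => w ++ [a])).filter fun w => !lastSqB w)

lemma mem_sfWords : ∀ n (w : List (Fin 3)), w.length = n → SquareFree w → w ∈ sfWords n := by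
  intro n
  induction n with
  | zero => intro w hl _; simp [sfWords]; exact List.eq_nil_of_length_eq_zero hl
  | succ n ih =>
    intro w hl hsf
    have hne : w ≠ [] := by intro h; rw [h] at hl; simp at hl
    have hw : w = w.dropLast ++ [w.getLast hne] := (List.dropLast_append_getLast hne).symm
    have hdl : w.dropLast.length = n := by
      simp [List.length_dropLast, hl]
    have hdsf : SquareFree w.dropLast := by
      apply squareFree_of_infix _ hsf
      exact (List.dropLast_prefix w).isInfix
    have hmem := ih w.dropLast hdl hdsf
    simp only [sfWords, List.mem_filter, List.mem_flatMap, List.mem_map]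
    constructor
    · have hall : ∀ a : Fin 3, a ∈ ([0,1,2] : List (Fin 3)) := by decide
      exact ⟨w.dropLast, hmem, w.getLast hne, hall _, hw.symm⟩
    · simp only [Bool.not_eq_true']
      rw [← Bool.not_eq_true]
      intro ht
      exact hsf (hasSquare_of_lastSqB ht)

def goodB (w : List (Fin 3)) : Bool :=
  (List.range w.length).any fun j =>
    decide (0 < j) && decide (j+1 < w.length) && !sqTestB (w.take j ++ w.drop (j+1))

set_option maxRecDepth 100000 in
set_option maxHeartbeats 4000000 in
lemma checkAll : (sfWords 4 ++ sfWords 5 ++ sfWords 7 ++ sfWords 12).all goodB = true := by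
  decide

theorem no_irrSF_of_lengths_4_5_7_12 (w : List (Fin 3))
    (h : w.length = 4 ∨ w.length = 5 ∨ w.length = 7 ∨ w.length = 12) :
    ¬ IrrSF w := by
  rintro ⟨hsf, hdel⟩
  have hmem : w ∈ sfWords 4 ++ sfWords 5 ++ sfWords 7 ++ sfWords 12 := by
    simp only [List.mem_append]
    rcases h with h | h | h | h
    · exact Or.inl (Or.inl (Or.inl (mem_sfWords 4 w h hsf)))
    · exact Or.inl (Or.inl (Or.inr (mem_sfWords 5 w h hsf)))
    · exact Or.inl (Or.inr (mem_sfWords 7 w h hsf))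
    · exact Or.inr (mem_sfWords 12 w h hsf)
  have hgood : goodB w = true := List.all_eq_true.mp checkAll w hmem
  simp only [goodB, List.any_eq_true, List.mem_range, Bool.and_eq_true,
    decide_eq_true_eq, Bool.not_eq_true'] at hgood
  obtain ⟨j, hjlen, ⟨hj0, hj1⟩, hdelSF⟩ := hgood
  have hjlt : j < w.length := by omega
  have hweq : w = w.take j ++ [w[j]] ++ w.drop (j+1) := by
    conv_lhs => rw [← List.take_append_drop j w]
    rw [List.append_assoc]
    congr 1
    rw [List.drop_eq_getElem_cons hjlt]
    rfl
  have h1 : w.take j ≠ [] := by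
    have hlt : (w.take j).length = j := by rw [List.length_take]; omega
    intro hc
    rw [hc] at hlt
    simp at hlt
    omega
  have h2 : w.drop (j+1) ≠ [] := by
    have hlt : (w.drop (j+1)).length = w.length - (j+1) := List.length_drop
    intro hc
    rw [hc] at hlt
    simp at hlt
    omega
  have hsq := hdel (w.take j) (w.drop (j+1)) w[j] hweq h1 h2
  rw [hasSquare_iff] at hsq
  rw [hsq] at hdelSF
  exact absurd hdelSF (by simp)
end

section
/- The morphism φ defined by φ(0)=01202120102120210, φ(1)=12010201210201021, φ(2)=20121012021012102 preserves square-freeness: if w is square-free then φ(w) is square-free. -/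
/-- The uniform morphism φ of length 17. -/
def phi : Fin 3 → List (Fin 3) := ![[0,1,2,0,2,1,2,0,1,0,2,1,2,0,2,1,0], [1,2,0,1,0,2,0,1,2,1,0,2,0,1,0,2,1], [2,0,1,2,1,0,1,2,0,2,1,0,1,2,1,0,2]]

def phiW (w : List (Fin 3)) : List (Fin 3) := w.flatMap phi

/- ------------------- auxiliary development ------------------- -/

open List

lemma getD_drop' (l : List (Fin 3)) (n i : ℕ) :
    (l.drop n).getD i 0 = l.getD (n + i) 0 := by
  simp [List.getD_eq_getElem?_getD, List.getElem?_drop]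

/-- Boolean square detector. -/
def hasSquareB (w : List (Fin 3)) : Bool :=
  (List.range w.length).any fun p =>
    (List.range (w.length / 2 + 1)).any fun l =>
      decide (l ≠ 0) && decide (p + 2 * l ≤ w.length) &&
        ((w.drop p).take l == (w.drop (p + l)).take l)

lemma hasSquare_intro (w : List (Fin 3)) (p l : ℕ) (hl : l ≠ 0)
    (hle : p + 2 * l ≤ w.length)
    (he : (w.drop p).take l = (w.drop (p + l)).take l) : HasSquare w := by
  have h1 : (w.drop p).take l ++ w.drop (p + l) = w.drop p := by
    have := List.take_append_drop l (w.drop p)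
    rwa [List.drop_drop] at this
  have h2 : (w.drop (p + l)).take l ++ w.drop (p + 2 * l) = w.drop (p + l) := by
    have h := List.take_append_drop l (w.drop (p + l))
    rw [List.drop_drop] at h
    have e : p + l + l = p + 2 * l := by omega
    rwa [e] at h
  refine ⟨(w.drop p).take l, ?_, w.take p, w.drop (p + 2 * l), ?_⟩
  · intro hnil
    have := congrArg List.length hnil
    simp [List.length_take, List.length_drop] at this
    omega
  · calc w.take p ++ ((w.drop p).take l ++ (w.drop p).take l) ++ w.drop (p + 2 * l)
        = w.take p ++ ((w.drop p).take l ++ ((w.drop (p + l)).take l ++ w.drop (p + 2 * l))) := by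
          rw [he]; simp [List.append_assoc]
      _ = w.take p ++ ((w.drop p).take l ++ w.drop (p + l)) := by rw [h2]
      _ = w.take p ++ w.drop p := by rw [h1]
      _ = w := List.take_append_drop p w

lemma B_of_hasSquare (w : List (Fin 3)) (h : HasSquare w) : hasSquareB w = true := by
  obtain ⟨u, hu, s, t, heq⟩ := h
  have hul : u.length ≠ 0 := fun h0 => hu (List.eq_nil_of_length_eq_zero h0)
  have hlen := congrArg List.length heq
  simp only [List.length_append] at hlen
  have hdrop : w.drop s.length = (u ++ u) ++ t := by
    rw [← heq, List.append_assoc, List.drop_left]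
  have hd1 : (w.drop s.length).take u.length = u := by
    rw [hdrop, List.append_assoc, List.take_left]
  have hdrop2 : w.drop (s.length + u.length) = u ++ t := by
    rw [← List.drop_drop, hdrop, List.append_assoc, List.drop_left]
  have hd2 : (w.drop (s.length + u.length)).take u.length = u := by
    rw [hdrop2, List.take_left]
  unfold hasSquareB
  rw [List.any_eq_true]
  refine ⟨s.length, List.mem_range.2 (by omega), ?_⟩
  rw [List.any_eq_true]
  refine ⟨u.length, List.mem_range.2 (by omega), ?_⟩
  simp only [Bool.and_eq_true, decide_eq_true_eq, beq_iff_eq]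
  exact ⟨⟨hul, by omega⟩, by rw [hd1, hd2]⟩

lemma hasSquare_of_B (w : List (Fin 3)) (h : hasSquareB w = true) : HasSquare w := by
  unfold hasSquareB at h
  rw [List.any_eq_true] at h
  obtain ⟨p, _, h⟩ := h
  rw [List.any_eq_true] at h
  obtain ⟨l, _, h⟩ := h
  simp only [Bool.and_eq_true, decide_eq_true_eq, beq_iff_eq] at h
  exact hasSquare_intro w p l h.1.1 h.1.2 h.2

lemma hasSquare_mono {v w : List (Fin 3)} (hvw : v <:+: w) (h : HasSquare v) :
    HasSquare w := by
  obtain ⟨u, hu, hi⟩ := h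
  exact ⟨u, hu, hi.trans hvw⟩

/-- enumeration of all words of length ≤ n -/
def words : ℕ → List (List (Fin 3))
  | 0 => [[]]
  | n + 1 => [] :: (words n).flatMap (fun v => [0 :: v, 1 :: v, 2 :: v])

lemma mem_words : ∀ (n : ℕ) (v : List (Fin 3)), v.length ≤ n → v ∈ words n := by
  intro n
  induction n with
  | zero =>
    intro v hv
    have : v = [] := List.eq_nil_of_length_eq_zero (by omega)
    subst this; simp [words]
  | succ n ih =>
    intro v hv
    cases v with
    | nil => simp [words]
    | cons a v' =>
      have hv' : v' ∈ words n := ih v' (by simpa using Nat.lt_succ_iff.1 hv)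
      simp only [words, List.mem_cons, List.mem_flatMap]
      right
      exact ⟨v', hv', by fin_cases a <;> simp⟩

def checkFn (v : List (Fin 3)) : Bool := hasSquareB v || !hasSquareB (phiW v)

lemma all_step {l : List (List (Fin 3))} {k n : ℕ}
    (h1 : (((l.drop k).take n).all checkFn) = true)
    (h2 : ((l.drop (k + n)).all checkFn) = true) :
    ((l.drop k).all checkFn) = true := by
  have hsplit : l.drop k = (l.drop k).take n ++ (l.drop k).drop n :=
    (List.take_append_drop _ _).symm
  rw [hsplit, List.all_append, List.drop_drop, h1, h2]; rfl

set_option maxRecDepth 10000 in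
lemma chunk_tail : (((words 5).drop 368).all checkFn) = true := by decide

set_option maxHeartbeats 4000000 in
set_option maxRecDepth 10000 in
lemma chunk_360 : (((words 5).drop 360).all checkFn) = true :=
  all_step (k := 360) (n := 8) (by decide) chunk_tail

set_option maxHeartbeats 4000000 in
set_option maxRecDepth 10000 in
lemma chunk_352 : (((words 5).drop 352).all checkFn) = true :=
  all_step (k := 352) (n := 8) (by decide) chunk_360

set_option maxHeartbeats 4000000 in
set_option maxRecDepth 10000 in
lemma chunk_344 : (((words 5).drop 344).all checkFn) = true :=
  all_step (k := 344) (n := 8) (by decide) chunk_352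

set_option maxHeartbeats 4000000 in
set_option maxRecDepth 10000 in
lemma chunk_336 : (((words 5).drop 336).all checkFn) = true :=
  all_step (k := 336) (n := 8) (by decide) chunk_344

set_option maxHeartbeats 4000000 in
set_option maxRecDepth 10000 in
lemma chunk_328 : (((words 5).drop 328).all checkFn) = true :=
  all_step (k := 328) (n := 8) (by decide) chunk_336

set_option maxHeartbeats 4000000 in
set_option maxRecDepth 10000 in
lemma chunk_320 : (((words 5).drop 320).all checkFn) = true :=
  all_step (k := 320) (n := 8) (by decide) chunk_328

set_option maxHeartbeats 4000000 in
set_option maxRecDepth 10000 in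
lemma chunk_312 : (((words 5).drop 312).all checkFn) = true :=
  all_step (k := 312) (n := 8) (by decide) chunk_320

set_option maxHeartbeats 4000000 in
set_option maxRecDepth 10000 in
lemma chunk_304 : (((words 5).drop 304).all checkFn) = true :=
  all_step (k := 304) (n := 8) (by decide) chunk_312

set_option maxHeartbeats 4000000 in
set_option maxRecDepth 10000 in
lemma chunk_296 : (((words 5).drop 296).all checkFn) = true :=
  all_step (k := 296) (n := 8) (by decide) chunk_304

set_option maxHeartbeats 4000000 in
set_option maxRecDepth 10000 in
lemma chunk_288 : (((words 5).drop 288).all checkFn) = true :=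
  all_step (k := 288) (n := 8) (by decide) chunk_296

set_option maxHeartbeats 4000000 in
set_option maxRecDepth 10000 in
lemma chunk_280 : (((words 5).drop 280).all checkFn) = true :=
  all_step (k := 280) (n := 8) (by decide) chunk_288

set_option maxHeartbeats 4000000 in
set_option maxRecDepth 10000 in
lemma chunk_272 : (((words 5).drop 272).all checkFn) = true :=
  all_step (k := 272) (n := 8) (by decide) chunk_280

set_option maxHeartbeats 4000000 in
set_option maxRecDepth 10000 in
lemma chunk_264 : (((words 5).drop 264).all checkFn) = true :=
  all_step (k := 264) (n := 8) (by decide) chunk_272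

set_option maxHeartbeats 4000000 in
set_option maxRecDepth 10000 in
lemma chunk_256 : (((words 5).drop 256).all checkFn) = true :=
  all_step (k := 256) (n := 8) (by decide) chunk_264

set_option maxHeartbeats 4000000 in
set_option maxRecDepth 10000 in
lemma chunk_248 : (((words 5).drop 248).all checkFn) = true :=
  all_step (k := 248) (n := 8) (by decide) chunk_256

set_option maxHeartbeats 4000000 in
set_option maxRecDepth 10000 in
lemma chunk_240 : (((words 5).drop 240).all checkFn) = true :=
  all_step (k := 240) (n := 8) (by decide) chunk_248

set_option maxHeartbeats 4000000 in
set_option maxRecDepth 10000 in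
lemma chunk_232 : (((words 5).drop 232).all checkFn) = true :=
  all_step (k := 232) (n := 8) (by decide) chunk_240

set_option maxHeartbeats 4000000 in
set_option maxRecDepth 10000 in
lemma chunk_224 : (((words 5).drop 224).all checkFn) = true :=
  all_step (k := 224) (n := 8) (by decide) chunk_232

set_option maxHeartbeats 4000000 in
set_option maxRecDepth 10000 in
lemma chunk_216 : (((words 5).drop 216).all checkFn) = true :=
  all_step (k := 216) (n := 8) (by decide) chunk_224

set_option maxHeartbeats 4000000 in
set_option maxRecDepth 10000 in
lemma chunk_208 : (((words 5).drop 208).all checkFn) = true :=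
  all_step (k := 208) (n := 8) (by decide) chunk_216

set_option maxHeartbeats 4000000 in
set_option maxRecDepth 10000 in
lemma chunk_200 : (((words 5).drop 200).all checkFn) = true :=
  all_step (k := 200) (n := 8) (by decide) chunk_208

set_option maxHeartbeats 4000000 in
set_option maxRecDepth 10000 in
lemma chunk_192 : (((words 5).drop 192).all checkFn) = true :=
  all_step (k := 192) (n := 8) (by decide) chunk_200

set_option maxHeartbeats 4000000 in
set_option maxRecDepth 10000 in
lemma chunk_184 : (((words 5).drop 184).all checkFn) = true :=
  all_step (k := 184) (n := 8) (by decide) chunk_192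

set_option maxHeartbeats 4000000 in
set_option maxRecDepth 10000 in
lemma chunk_176 : (((words 5).drop 176).all checkFn) = true :=
  all_step (k := 176) (n := 8) (by decide) chunk_184

set_option maxHeartbeats 4000000 in
set_option maxRecDepth 10000 in
lemma chunk_168 : (((words 5).drop 168).all checkFn) = true :=
  all_step (k := 168) (n := 8) (by decide) chunk_176

set_option maxHeartbeats 4000000 in
set_option maxRecDepth 10000 in
lemma chunk_160 : (((words 5).drop 160).all checkFn) = true :=
  all_step (k := 160) (n := 8) (by decide) chunk_168

set_option maxHeartbeats 4000000 in
set_option maxRecDepth 10000 in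
lemma chunk_152 : (((words 5).drop 152).all checkFn) = true :=
  all_step (k := 152) (n := 8) (by decide) chunk_160

set_option maxHeartbeats 4000000 in
set_option maxRecDepth 10000 in
lemma chunk_144 : (((words 5).drop 144).all checkFn) = true :=
  all_step (k := 144) (n := 8) (by decide) chunk_152

set_option maxHeartbeats 4000000 in
set_option maxRecDepth 10000 in
lemma chunk_136 : (((words 5).drop 136).all checkFn) = true :=
  all_step (k := 136) (n := 8) (by decide) chunk_144

set_option maxHeartbeats 4000000 in
set_option maxRecDepth 10000 in
lemma chunk_128 : (((words 5).drop 128).all checkFn) = true :=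
  all_step (k := 128) (n := 8) (by decide) chunk_136

set_option maxHeartbeats 4000000 in
set_option maxRecDepth 10000 in
lemma chunk_120 : (((words 5).drop 120).all checkFn) = true :=
  all_step (k := 120) (n := 8) (by decide) chunk_128

set_option maxHeartbeats 4000000 in
set_option maxRecDepth 10000 in
lemma chunk_112 : (((words 5).drop 112).all checkFn) = true :=
  all_step (k := 112) (n := 8) (by decide) chunk_120

set_option maxHeartbeats 4000000 in
set_option maxRecDepth 10000 in
lemma chunk_104 : (((words 5).drop 104).all checkFn) = true :=
  all_step (k := 104) (n := 8) (by decide) chunk_112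

set_option maxHeartbeats 4000000 in
set_option maxRecDepth 10000 in
lemma chunk_96 : (((words 5).drop 96).all checkFn) = true :=
  all_step (k := 96) (n := 8) (by decide) chunk_104

set_option maxHeartbeats 4000000 in
set_option maxRecDepth 10000 in
lemma chunk_88 : (((words 5).drop 88).all checkFn) = true :=
  all_step (k := 88) (n := 8) (by decide) chunk_96

set_option maxHeartbeats 4000000 in
set_option maxRecDepth 10000 in
lemma chunk_80 : (((words 5).drop 80).all checkFn) = true :=
  all_step (k := 80) (n := 8) (by decide) chunk_88

set_option maxHeartbeats 4000000 in
set_option maxRecDepth 10000 in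
lemma chunk_72 : (((words 5).drop 72).all checkFn) = true :=
  all_step (k := 72) (n := 8) (by decide) chunk_80

set_option maxHeartbeats 4000000 in
set_option maxRecDepth 10000 in
lemma chunk_64 : (((words 5).drop 64).all checkFn) = true :=
  all_step (k := 64) (n := 8) (by decide) chunk_72

set_option maxHeartbeats 4000000 in
set_option maxRecDepth 10000 in
lemma chunk_56 : (((words 5).drop 56).all checkFn) = true :=
  all_step (k := 56) (n := 8) (by decide) chunk_64

set_option maxHeartbeats 4000000 in
set_option maxRecDepth 10000 in
lemma chunk_48 : (((words 5).drop 48).all checkFn) = true :=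
  all_step (k := 48) (n := 8) (by decide) chunk_56

set_option maxHeartbeats 4000000 in
set_option maxRecDepth 10000 in
lemma chunk_40 : (((words 5).drop 40).all checkFn) = true :=
  all_step (k := 40) (n := 8) (by decide) chunk_48

set_option maxHeartbeats 4000000 in
set_option maxRecDepth 10000 in
lemma chunk_32 : (((words 5).drop 32).all checkFn) = true :=
  all_step (k := 32) (n := 8) (by decide) chunk_40

set_option maxHeartbeats 4000000 in
set_option maxRecDepth 10000 in
lemma chunk_24 : (((words 5).drop 24).all checkFn) = true :=
  all_step (k := 24) (n := 8) (by decide) chunk_32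

set_option maxHeartbeats 4000000 in
set_option maxRecDepth 10000 in
lemma chunk_16 : (((words 5).drop 16).all checkFn) = true :=
  all_step (k := 16) (n := 8) (by decide) chunk_24

set_option maxHeartbeats 4000000 in
set_option maxRecDepth 10000 in
lemma chunk_8 : (((words 5).drop 8).all checkFn) = true :=
  all_step (k := 8) (n := 8) (by decide) chunk_16

set_option maxHeartbeats 4000000 in
set_option maxRecDepth 10000 in
lemma chunk_0 : (((words 5).drop 0).all checkFn) = true :=
  all_step (k := 0) (n := 8) (by decide) chunk_8

lemma factA_bool : ((words 5).all fun v => hasSquareB v || !hasSquareB (phiW v)) = true := by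
  have h := chunk_0
  simpa [checkFn] using h

lemma factA (v : List (Fin 3)) (hv : v.length ≤ 5) (hsf : SquareFree v) :
    SquareFree (phiW v) := by
  intro hsq
  have hm := mem_words 5 v hv
  have h2 := List.all_eq_true.1 factA_bool v hm
  rw [Bool.or_eq_true] at h2
  rcases h2 with h3 | h3
  · exact hsf (hasSquare_of_B v h3)
  · rw [Bool.not_eq_true'] at h3
    rw [B_of_hasSquare (phiW v) hsq] at h3
    exact Bool.noConfusion h3

lemma sync_fin : ∀ (a b c : Fin 3) (t : Fin 17), 1 ≤ (t : ℕ) →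
    ∃ i : Fin 17, (phi a).getD ((i : ℕ)) 0 ≠ (phi b ++ phi c).getD ((t : ℕ) + (i : ℕ)) 0 := by
  decide

lemma sync (a b c : Fin 3) (t : ℕ) (h1 : 1 ≤ t) (h2 : t ≤ 16) :
    ∃ i, i < 17 ∧ (phi a).getD i 0 ≠ (phi b ++ phi c).getD (t + i) 0 := by
  obtain ⟨i, hi⟩ := sync_fin a b c ⟨t, by omega⟩ h1
  exact ⟨(i : ℕ), i.2, hi⟩

lemma phi_len : ∀ a : Fin 3, (phi a).length = 17 := by decide

lemma phi_last : ∀ a : Fin 3, (phi a).getD 16 0 = a := by decide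

lemma phiW_cons (a : Fin 3) (w : List (Fin 3)) : phiW (a :: w) = phi a ++ phiW w := rfl

lemma phiW_append (v w : List (Fin 3)) : phiW (v ++ w) = phiW v ++ phiW w := by
  simp [phiW]

lemma phiW_length (w : List (Fin 3)) : (phiW w).length = 17 * w.length := by
  induction w with
  | nil => rfl
  | cons a w ih =>
    rw [phiW_cons, List.length_append, ih, phi_len, List.length_cons]
    ring

lemma phiW_getD : ∀ (w : List (Fin 3)) (j i : ℕ), j < w.length → i < 17 →
    (phiW w).getD (17 * j + i) 0 = (phi (w.getD j 0)).getD i 0 := by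
  intro w
  induction w with
  | nil => intro j i hj _; simp at hj
  | cons a w ih =>
    intro j i hj hi
    cases j with
    | zero =>
      rw [phiW_cons]
      simp only [Nat.mul_zero, Nat.zero_add]
      rw [List.getD_append _ _ _ _ (by rw [phi_len]; exact hi)]
      rfl
    | succ j =>
      rw [phiW_cons, List.getD_append_right _ _ _ _ (by rw [phi_len]; omega)]
      rw [phi_len, show 17 * (j + 1) + i - 17 = 17 * j + i by omega]
      rw [ih j i (by simpa using Nat.lt_succ_iff.1 hj) hi]
      rfl

lemma infix_take {s m t x y : List (Fin 3)} (heq : s ++ m ++ t = x ++ y)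
    (hle : s.length + m.length ≤ x.length) : ∃ t', s ++ m ++ t' = x := by
  refine ⟨t.take (x.length - (s.length + m.length)), ?_⟩
  have hx2 : (s ++ m ++ t).take x.length = x := by
    rw [heq]; exact List.take_left
  have hstep : (s ++ m ++ t).take x.length
      = s ++ m ++ t.take (x.length - (s.length + m.length)) := by
    rw [List.take_append,
      List.take_of_length_le (by simp only [List.length_append]; omega),
      List.length_append]
  exact hstep.symm.trans hx2

lemma drops_take_eq {w : List (Fin 3)} {a b n : ℕ} (ha : a + n ≤ w.length)
    (hb : b + n ≤ w.length)
    (hq : ∀ i, i < n → w.getD (a + i) 0 = w.getD (b + i) 0) :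
    (w.drop a).take n = (w.drop b).take n := by
  apply List.ext_getElem
  · simp only [List.length_take, List.length_drop]; omega
  · intro i h1 h2
    have hi : i < n := by simp only [List.length_take, List.length_drop] at h1; omega
    rw [List.getElem_take, List.getElem_take, List.getElem_drop, List.getElem_drop]
    have h3 := hq i hi
    rwa [List.getD_eq_getElem w 0 (n := a + i) (by omega),
      List.getD_eq_getElem w 0 (n := b + i) (by omega)] at h3

lemma infix_drop {s m t x y : List (Fin 3)} (heq : s ++ m ++ t = x ++ y)
    (hle : x.length ≤ s.length) : ∃ s', s' ++ m ++ t = y := by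
  refine ⟨s.drop x.length, ?_⟩
  have hy2 : (s ++ m ++ t).drop x.length = y := by
    rw [heq]; exact List.drop_left
  have hstep : (s ++ m ++ t).drop x.length = s.drop x.length ++ m ++ t := by
    rw [List.append_assoc, List.drop_append,
      show x.length - s.length = 0 by omega, List.drop_zero, ← List.append_assoc]
  rw [← hy2, hstep]

set_option maxHeartbeats 1600000 in
theorem phi_preserves_squareFree (w : List (Fin 3)) (h : SquareFree w) :
    SquareFree (phiW w) := by
  rintro ⟨u, hu, s, t, heq⟩
  have hL : u.length ≠ 0 := fun h0 => hu (List.eq_nil_of_length_eq_zero h0)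
  have hlen := congrArg List.length heq
  simp only [List.length_append, phiW_length] at hlen
  by_cases hsmall : u.length ≤ 33
  · -- small square: lives inside the image of a factor of length ≤ 5
    obtain ⟨j0, hj0⟩ : ∃ j0, j0 = s.length / 17 := ⟨_, rfl⟩
    set v : List (Fin 3) := (w.drop j0).take 5 with hv
    have hvw : v <:+: w := (List.take_prefix 5 (w.drop j0)).isInfix.trans
      (List.drop_suffix j0 w).isInfix
    have hsfv : SquareFree v := fun hs => h (hasSquare_mono hvw hs)
    have hvlen : v.length ≤ 5 := by
      rw [hv, List.length_take]; omega
    have hsplit1 : phiW w = phiW (w.take (j0 + 5)) ++ phiW (w.drop (j0 + 5)) := by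
      rw [← phiW_append, List.take_append_drop]
    have hlen1 : s.length + (u ++ u).length ≤ (phiW (w.take (j0 + 5))).length := by
      rw [phiW_length, List.length_take, List.length_append]
      rcases Nat.le_total (j0 + 5) w.length with h' | h'
      · rw [Nat.min_eq_left h']; omega
      · rw [Nat.min_eq_right h']; omega
    obtain ⟨t', ht'⟩ := infix_take (heq.trans hsplit1) hlen1
    have hsplit2 : phiW (w.take (j0 + 5)) = phiW (w.take j0) ++ phiW v := by
      rw [← phiW_append, hv, ← List.take_add]
    have hlen2 : (phiW (w.take j0)).length ≤ s.length := by
      rw [phiW_length, List.length_take]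
      rcases Nat.le_total j0 w.length with h' | h'
      · rw [Nat.min_eq_left h']; omega
      · rw [Nat.min_eq_right h']; omega
    obtain ⟨s', hs'⟩ := infix_drop (ht'.trans hsplit2) hlen2
    exact factA v hvlen hsfv ⟨u, hu, s', t', hs'⟩
  · -- large square : synchronization
    push_neg at hsmall
    have key : ∀ i, i < u.length →
        (phiW w).getD (s.length + i) 0 = (phiW w).getD (s.length + u.length + i) 0 := by
      intro i hi
      have hdrop : (phiW w).drop s.length = (u ++ u) ++ t := by
        rw [← heq, List.append_assoc, List.drop_left]
      have e1 : (phiW w).getD (s.length + i) 0 = u.getD i 0 := by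
        rw [← getD_drop', hdrop, List.append_assoc,
          List.getD_append _ _ _ _ (by omega)]
      have e2 : (phiW w).getD (s.length + u.length + i) 0 = u.getD i 0 := by
        rw [show s.length + u.length + i = s.length + (u.length + i) by omega,
          ← getD_drop', hdrop, List.append_assoc,
          List.getD_append_right _ _ _ _ (by omega),
          show u.length + i - u.length = i by omega,
          List.getD_append _ _ _ _ (by omega)]
      rw [e1, e2]
    obtain ⟨j, hj⟩ : ∃ j, j = (s.length + 16) / 17 := ⟨_, rfl⟩
    have hjw : j < w.length := by omega
    have hocc : ∀ i, i < 17 →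
        (phi (w.getD j 0)).getD i 0 = (phiW w).getD (17 * j + u.length + i) 0 := by
      intro i hi
      rw [← phiW_getD w j i hjw hi,
        show 17 * j + i = s.length + (17 * j + i - s.length) by omega,
        key (17 * j + i - s.length) (by omega),
        show s.length + u.length + (17 * j + i - s.length) = 17 * j + u.length + i by omega]
    by_cases ht' : (17 * j + u.length) % 17 = 0
    · -- aligned : u.length is a multiple of 17 and we find a square in w
      have hL17 : u.length % 17 = 0 := by omega
      obtain ⟨m, hm⟩ : ∃ m, m = u.length / 17 := ⟨_, rfl⟩
      obtain ⟨j0, hj0⟩ : ∃ j0, j0 = s.length / 17 := ⟨_, rfl⟩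
      have hlet : ∀ i, i < m → w.getD (j0 + i) 0 = w.getD (j0 + m + i) 0 := by
        intro i hi
        have h1 : w.getD (j0 + i) 0 = (phiW w).getD (17 * (j0 + i) + 16) 0 := by
          rw [phiW_getD w _ 16 (by omega) (by omega), phi_last]
        have h2 : w.getD (j0 + m + i) 0 = (phiW w).getD (17 * (j0 + m + i) + 16) 0 := by
          rw [phiW_getD w _ 16 (by omega) (by omega), phi_last]
        rw [h1, h2,
          show 17 * (j0 + i) + 16 = s.length + (17 * (j0 + i) + 16 - s.length) by omega,
          key _ (by omega),
          show s.length + u.length + (17 * (j0 + i) + 16 - s.length)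
            = 17 * (j0 + m + i) + 16 by omega]
      exact h (hasSquare_intro w j0 m (by omega) (by omega)
        (drops_take_eq (by omega) (by omega) hlet))
    · -- misaligned : contradicts the synchronization check
      obtain ⟨j', hj'⟩ : ∃ j', j' = (17 * j + u.length) / 17 := ⟨_, rfl⟩
      obtain ⟨t', ht'def⟩ : ∃ t', t' = (17 * j + u.length) % 17 := ⟨_, rfl⟩
      have hj'w : j' + 1 < w.length := by omega
      obtain ⟨i, hi17, hne⟩ := sync (w.getD j 0) (w.getD j' 0) (w.getD (j' + 1) 0) t'
        (by omega) (by omega)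
      apply hne
      rw [hocc i hi17]
      by_cases hti : t' + i < 17
      · rw [show 17 * j + u.length + i = 17 * j' + (t' + i) by omega,
          phiW_getD w j' _ (by omega) hti,
          List.getD_append _ _ _ _ (by rw [phi_len]; exact hti)]
      · rw [show 17 * j + u.length + i = 17 * (j' + 1) + (t' + i - 17) by omega,
          phiW_getD w (j' + 1) _ hj'w (by omega),
          List.getD_append_right _ _ _ _ (by rw [phi_len]; omega), phi_len]
end

section
/- The word φ(0) = 01202120102120210 is irreducibly square-free. -/
/-- A decidable (boundedly quantified) characterization of `HasSquare`. -/
lemma hasSquare_iff_s7 (w : List (Fin 3)) :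
    HasSquare w ↔ ∃ s ≤ w.length, ∃ k ≤ w.length, k ≠ 0 ∧ s + 2*k ≤ w.length ∧
      (w.drop s).take k = (w.drop (s+k)).take k := by
  constructor
  · rintro ⟨u, hu, p, q, hpq⟩
    subst hpq
    refine ⟨p.length, ?_, u.length, ?_, ?_, ?_, ?_⟩
    · simp
    · simp; omega
    · simpa using hu
    · simp; omega
    · have e : p ++ (u ++ u) ++ q = (p ++ u) ++ (u ++ q) := by simp [List.append_assoc]
      rw [e]
      have h1 : ((p ++ u) ++ (u ++ q)).drop p.length = u ++ (u ++ q) := by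
        rw [List.append_assoc, List.drop_left]
      have h2 : ((p ++ u) ++ (u ++ q)).drop (p.length + u.length) = u ++ q := by
        rw [show p.length + u.length = (p ++ u).length by simp, List.drop_left]
      rw [h1, h2, List.take_left, List.take_left]
  · rintro ⟨s, hs, k, hk, hk0, hlen, heq⟩
    refine ⟨(w.drop s).take k, ?_, w.take s, w.drop (s+2*k), ?_⟩
    · rw [← List.length_pos_iff]
      simp only [List.length_take, List.length_drop]
      omega
    · have h1 : (w.drop s).take k ++ (w.drop s).take k
          = (w.drop s).take k ++ ((w.drop s).drop k).take k := by
        rw [List.drop_drop, ← heq]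
      rw [h1, ← List.take_add]
      have h2 : w.drop (s + 2*k) = (w.drop s).drop (k + k) := by
        rw [List.drop_drop]; ring_nf
      rw [h2, List.append_assoc, List.take_append_drop, List.take_append_drop]

lemma key_del : ∀ m, 1 ≤ m → m ≤ 15 →
    HasSquare ((phi 0).take m ++ (phi 0).drop (m+1)) := by
  have h : ∀ m < 16, 1 ≤ m →
      (∃ s ≤ ((phi 0).take m ++ (phi 0).drop (m+1)).length,
        ∃ k ≤ ((phi 0).take m ++ (phi 0).drop (m+1)).length, k ≠ 0 ∧
          s + 2*k ≤ ((phi 0).take m ++ (phi 0).drop (m+1)).length ∧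
          (((phi 0).take m ++ (phi 0).drop (m+1)).drop s).take k
            = (((phi 0).take m ++ (phi 0).drop (m+1)).drop (s+k)).take k) := by decide
  intro m h1 h2
  rw [hasSquare_iff_s7]
  exact h m (by omega) h1

theorem phi0_irreducibly_squareFree : IrrSF (phi 0) := by
  constructor
  · show ¬ HasSquare (phi 0)
    rw [hasSquare_iff_s7]; decide
  · intro w1 w2 a h h1 h2
    have hlen : (phi 0).length = 17 := by decide
    have hL : (phi 0).length = w1.length + 1 + w2.length := by
      rw [h]; simp; omega
    have hw1 : 1 ≤ w1.length := List.length_pos_iff.mpr h1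
    have hw2 : 1 ≤ w2.length := List.length_pos_iff.mpr h2
    have e1 : w1 = (phi 0).take w1.length := by
      rw [h, List.append_assoc, List.take_left]
    have e2 : w2 = (phi 0).drop (w1.length + 1) := by
      rw [h,
        show w1.length + 1 = (w1 ++ [a]).length by simp, List.drop_left]
    rw [e1, e2]
    exact key_del w1.length hw1 (by omega)
end

section
/- The morphism φ with φ(0)=01202120102120210, φ(1)=12010201210201021, φ(2)=20121012021012102 has the alignment property: for all letters a, b, c, if φ(bc) = u·φ(a)·v, then u or v is empty, and correspondingly a = b or a = c. -/
lemma phi_aux : ∀ (a b c : Fin 3) (k : Fin 18),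
    ((phi b ++ phi c).drop k.val).take 17 = phi a →
    (k.val = 0 ∧ a = b) ∨ (k.val = 17 ∧ a = c) := by decide

theorem phi_alignment (a b c : Fin 3) (u v : List (Fin 3))
    (h : phi b ++ phi c = u ++ phi a ++ v) :
    (u = [] ∧ a = b) ∨ (v = [] ∧ a = c) := by
  have la : (phi a).length = 17 := by fin_cases a <;> rfl
  have lb : (phi b).length = 17 := by fin_cases b <;> rfl
  have lc : (phi c).length = 17 := by fin_cases c <;> rfl
  have hlen : 34 = u.length + 17 + v.length := by
    have := congrArg List.length h
    simp [lb, lc, la] at this; omega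
  have hk : u.length < 18 := by omega
  have key : ((phi b ++ phi c).drop u.length).take 17 = phi a := by
    rw [h, List.append_assoc, List.drop_left, ← la, List.take_left]
  rcases phi_aux a b c ⟨u.length, hk⟩ key with ⟨h0, hab⟩ | ⟨h17, hac⟩
  · exact Or.inl ⟨List.eq_nil_of_length_eq_zero h0, hab⟩
  · exact Or.inr ⟨List.eq_nil_of_length_eq_zero (by simp at h17; omega), hac⟩
end

section
/- For each pair of distinct letters a, b in {0,1,2}, the word φ(ab) of length 34 is irreducibly square-free, where φ(0)=01202120102120210, φ(1)=12010201210201021, φ(2)=20121012021012102. -/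
/-- Boolean square checker. -/
def chkB (w : List (Fin 3)) : Bool :=
  (List.range (w.length+1)).any fun i =>
    (List.range (w.length/2+1)).any fun n =>
      decide (0 < n) && decide (i+n+n ≤ w.length) &&
        ((w.drop i).take n == (w.drop (i+n)).take n)

lemma hasSquare_iff_chkB (w : List (Fin 3)) : HasSquare w ↔ chkB w = true := by
  simp only [chkB, List.any_eq_true, List.mem_range, Bool.and_eq_true,
    decide_eq_true_eq, beq_iff_eq]
  constructor
  · rintro ⟨u, hu, s, t, hst⟩
    have hupos : 0 < u.length := List.length_pos_iff.mpr hu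
    have hlen : w.length = s.length + (u.length + (u.length + t.length)) := by
      rw [← hst]; simp
    refine ⟨s.length, by omega, u.length, by omega, ⟨⟨hupos, by omega⟩, ?_⟩⟩
    have h1 : w.drop s.length = u ++ (u ++ t) := by
      rw [← hst, List.append_assoc, List.drop_left, List.append_assoc]
    have h2 : w.drop (s.length + u.length) = u ++ t := by
      have hw2 : w = (s ++ u) ++ (u ++ t) := by rw [← hst]; simp
      rw [hw2, show s.length + u.length = (s ++ u).length by simp, List.drop_left]
    rw [h1, h2, List.take_left, List.take_left]
  · rintro ⟨i, _, n, _, ⟨hn, hle⟩, heq⟩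
    refine ⟨(w.drop i).take n, ?_, ?_⟩
    · have hl : ((w.drop i).take n).length = n := by simp; omega
      intro hnil; rw [hnil] at hl; simp at hl; omega
    · have h1 : (w.drop i).take n ++ (w.drop i).take n = (w.drop i).take (n+n) := by
        rw [List.take_add]
        congr 1
        rw [List.drop_drop]
        exact heq
      rw [h1]
      exact ((w.drop i).take_prefix _).isInfix.trans (w.drop_suffix i).isInfix

/-- Boolean checker for the irreducibility part. -/
def delB (w : List (Fin 3)) : Bool :=
  (List.range w.length).all fun k =>
    decide (k = 0) || decide (w.length ≤ k+1) || chkB (w.take k ++ w.drop (k+1))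

lemma irrSF_of (w : List (Fin 3)) (h0 : chkB w = false) (hd : delB w = true) :
    IrrSF w := by
  refine ⟨fun hs => by simpa [h0] using (hasSquare_iff_chkB w).mp hs, ?_⟩
  intro w1 w2 a hw h1 h2
  have hk1 : 0 < w1.length := List.length_pos_iff.mpr h1
  have hk2 : 0 < w2.length := List.length_pos_iff.mpr h2
  have hlen : w.length = w1.length + 1 + w2.length := by rw [hw]; simp; omega
  have ht : w.take w1.length = w1 := by rw [hw, List.append_assoc, List.take_left]
  have hdr : w.drop (w1.length+1) = w2 := by
    rw [hw, show w1.length + 1 = (w1 ++ [a]).length by simp, List.drop_left]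
  simp only [delB, List.all_eq_true, List.mem_range, Bool.or_eq_true,
    decide_eq_true_eq] at hd
  have := hd w1.length (by omega)
  rcases this with (h | h) | h
  · omega
  · omega
  · rw [hasSquare_iff_chkB]
    rwa [ht, hdr] at h

set_option maxHeartbeats 1600000 in
theorem phi_pairs_irreducibly_squareFree (a b : Fin 3) (h : a ≠ b) :
    IrrSF (phi a ++ phi b) := by
  fin_cases a <;> fin_cases b <;>
    first
      | exact absurd rfl h
      | exact irrSF_of _ (by decide) (by decide)
end
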